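/- Let F ⊂ H^n be compact with σ(F) = F, where σ([z,t]) = [conj(z), t]. Then the Steiner symmetrization St(F) of F with respect to the C^n-plane satisfies diam(St F) ≤ diam F in the Carnot-Carathéodory metric. -/

import Mathlib

open scoped Real ENNReal
open MeasureTheory

noncomputable section

/-- The Heisenberg group `ℍⁿ`, identified with `ℂⁿ × ℝ` (with the Euclidean `ℓ²` norm on
the `ℂⁿ` factor). -/
abbrev Heis (n : ℕ) : Type := EuclideanSpace ℂ (Fin n) × ℝ

/-- Borel σ-algebra on `ℂⁿ`. -/
instance (n : ℕ) : MeasurableSpace (EuclideanSpace ℂ (Fin n)) := borel _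

instance (n : ℕ) : BorelSpace (EuclideanSpace ℂ (Fin n)) := ⟨rfl⟩

/-- Lebesgue measure on `ℂⁿ`. -/
instance (n : ℕ) : MeasureSpace (EuclideanSpace ℂ (Fin n)) :=
  ⟨Measure.map ((WithLp.equiv 2 (Fin n → ℂ)).symm) volume⟩

namespace Heis

/-- The Hermitian product `z ⬝ conj w = ∑ zⱼ conj(wⱼ)`. -/
def herm {n : ℕ} (z w : EuclideanSpace ℂ (Fin n)) : ℂ :=
  ∑ j, z j * (starRingEnd ℂ) (w j)

/-- The Heisenberg group law `[z,t]·[z',t'] = [z+z', t+t'+2 Im (z ⬝ conj z')]`. -/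
def mul {n : ℕ} (p q : Heis n) : Heis n :=
  (p.1 + q.1, p.2 + q.2 + 2 * (herm p.1 q.1).im)

/-- Dilations `δ_λ [z,t] = [λ z, λ² t]`. -/
def dilation {n : ℕ} (l : ℝ) (p : Heis n) : Heis n := (l • p.1, l ^ 2 * p.2)

/-- A `C¹` horizontal curve in the Heisenberg group: at every point the tangent vector lies
in the horizontal subbundle spanned by the left-invariant fields
`X_j = ∂_{x_j} + 2 y_j ∂_t`, `Y_j = ∂_{y_j} - 2 x_j ∂_t`, which amounts to
`t'(s) = 2 Im (z(s) ⬝ conj z'(s))`. -/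
structure HorizCurve (n : ℕ) where
  z : ℝ → EuclideanSpace ℂ (Fin n)
  t : ℝ → ℝ
  z' : ℝ → EuclideanSpace ℂ (Fin n)
  hz : ∀ s : ℝ, HasDerivAt z (z' s) s
  ht : ∀ s : ℝ, HasDerivAt t (2 * (herm (z s) (z' s)).im) s
  hz' : Continuous z'

/-- The sub-Riemannian length of a horizontal curve (the metric `g` makes the horizontal
frame orthonormal, so the length is the integral of the Euclidean norm of `z'`). -/
def HorizCurve.length {n : ℕ} (γ : HorizCurve n) : ℝ :=
  ∫ s in (0:ℝ)..1, ‖γ.z' s‖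

/-- The Carnot–Carathéodory distance: the infimum of lengths of horizontal curves
joining `p` to `q`. -/
def ccDist {n : ℕ} (p q : Heis n) : ℝ :=
  sInf { L : ℝ | ∃ γ : HorizCurve n, γ.z 0 = p.1 ∧ γ.t 0 = p.2 ∧
      γ.z 1 = q.1 ∧ γ.t 1 = q.2 ∧ L = γ.length }

/-- Open CC-ball. -/
def ccBall {n : ℕ} (p : Heis n) (r : ℝ) : Set (Heis n) := { q | ccDist p q < r }

/-- Closed CC-ball. -/
def ccClosedBall {n : ℕ} (p : Heis n) (r : ℝ) : Set (Heis n) := { q | ccDist p q ≤ r }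

/-- CC-diameter of a set. -/
def ccDiam {n : ℕ} (F : Set (Heis n)) : ℝ :=
  sSup { r : ℝ | ∃ p ∈ F, ∃ q ∈ F, r = ccDist p q }

/-- A set is CC-bounded if the pairwise CC-distances of its points are bounded. -/
def ccBounded {n : ℕ} (F : Set (Heis n)) : Prop :=
  ∃ M : ℝ, ∀ p ∈ F, ∀ q ∈ F, ccDist p q ≤ M

/-- The vertical segment joining two points with the same `ℂⁿ`-component. -/
def vseg {n : ℕ} (p q : Heis n) : Set (Heis n) :=
  { x | x.1 = p.1 ∧ x.2 ∈ Set.uIcc p.2 q.2 }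

/-- The `t`-convex hull of a set. -/
def tco {n : ℕ} (F : Set (Heis n)) : Set (Heis n) :=
  { x | ∃ p₁ ∈ F, ∃ p₂ ∈ F, p₁.1 = p₂.1 ∧ x ∈ vseg p₁ p₂ }

/-- A set is `t`-convex if it contains the vertical segment joining any two of its points
having the same `ℂⁿ`-component. -/
def TConvex {n : ℕ} (E : Set (Heis n)) : Prop :=
  ∀ p ∈ E, ∀ q ∈ E, p.1 = q.1 → vseg p q ⊆ E

/-- The rotation `r_θ [z,t] = [(e^{iθ₁} z₁, …, e^{iθₙ} zₙ), t]`. -/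
def rot {n : ℕ} (θ : Fin n → ℝ) (p : Heis n) : Heis n :=
  ((WithLp.equiv 2 (Fin n → ℂ)).symm fun j => Complex.exp ((θ j : ℂ) * Complex.I) * p.1 j,
    p.2)

/-- Rotationally invariant sets: the class `𝓡`. -/
def RotInvariant {n : ℕ} (F : Set (Heis n)) : Prop :=
  ∀ θ : Fin n → ℝ, rot θ '' F ⊆ F

/-- The reflection `σ [z,t] = [conj z, t]`. -/
def sigmaRefl {n : ℕ} (p : Heis n) : Heis n :=
  ((WithLp.equiv 2 (Fin n → ℂ)).symm fun j => (starRingEnd ℂ) (p.1 j), p.2)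

/-- The Steiner symmetrization of a set with respect to the `ℂⁿ`-plane. -/
def steiner {n : ℕ} (F : Set (Heis n)) : Set (Heis n) :=
  { x | x.1 ∈ Prod.fst '' F ∧
      2 * |x.2| ≤ (volume { s : ℝ | ((x.1, s) : Heis n) ∈ F }).toReal }

/-- The isodiametric constant `C_I`. -/
def CI (n : ℕ) : ℝ :=
  sSup { x : ℝ | ∃ F : Set (Heis n), ccBounded F ∧ 0 < ccDiam F ∧
    x = (volume F).toReal / (ccDiam F) ^ (2 * n + 2) }

/-- The isodiametric constant `C_{I,𝓡}` for the restricted problem in the class `𝓡`. -/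
def CIR (n : ℕ) : ℝ :=
  sSup { x : ℝ | ∃ F : Set (Heis n), RotInvariant F ∧ ccBounded F ∧ 0 < ccDiam F ∧
    x = (volume F).toReal / (ccDiam F) ^ (2 * n + 2) }

end Heis


namespace Heis
open intervalIntegral

variable {n : ℕ}

local notation "E" => EuclideanSpace ℂ (Fin n)

lemma herm_eq_inner (z w : E) : herm z w = (inner ℂ w z : ℂ) := by
  simp [herm, PiLp.inner_apply, mul_comm]

lemma continuous_herm {f g : ℝ → E} (hf : Continuous f) (hg : Continuous g) :
    Continuous fun s => herm (f s) (g s) := by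
  simp only [herm_eq_inner]
  exact Continuous.inner (𝕜 := ℂ) hg hf

lemma herm_im_self (z : E) : (herm z z).im = 0 := by
  rw [herm_eq_inner]
  exact inner_self_im (𝕜 := ℂ) z

lemma HorizCurve.cz (γ : HorizCurve n) : Continuous γ.z :=
  continuous_iff_continuousAt.2 fun s => (γ.hz s).continuousAt

lemma HorizCurve.integrand_continuous (γ : HorizCurve n) :
    Continuous fun s => 2 * (herm (γ.z s) (γ.z' s)).im :=
  continuous_const.mul (Complex.continuous_im.comp (continuous_herm γ.cz γ.hz'))

/-- Construct a horizontal curve from `z`, `z'` data, integrating to get `t`. -/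
def mkCurve (z : ℝ → E) (z' : ℝ → E) (hz : ∀ s, HasDerivAt z (z' s) s)
    (hc : Continuous z') (t₀ : ℝ) : HorizCurve n where
  z := z
  t := fun s => t₀ + ∫ u in (0:ℝ)..s, 2 * (herm (z u) (z' u)).im
  z' := z'
  hz := hz
  hz' := hc
  ht := by
    intro s
    have hcont : Continuous fun u => 2 * (herm (z u) (z' u)).im :=
      continuous_const.mul (Complex.continuous_im.comp
        (continuous_herm (continuous_iff_continuousAt.2 fun s => (hz s).continuousAt) hc))
    have := (intervalIntegral.integral_hasDerivAt_right
      (hcont.intervalIntegrable 0 s) (hcont.stronglyMeasurableAtFilter _ _)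
      hcont.continuousAt)
    exact this.const_add t₀

@[simp] lemma mkCurve_t0 (z : ℝ → E) (z' : ℝ → E) (hz) (hc) (t₀ : ℝ) :
    (mkCurve z z' hz hc t₀).t 0 = t₀ := by simp [mkCurve]

lemma mkCurve_t1 (z : ℝ → E) (z' : ℝ → E) (hz) (hc) (t₀ : ℝ) :
    (mkCurve z z' hz hc t₀).t 1 = t₀ + ∫ u in (0:ℝ)..1, 2 * (herm (z u) (z' u)).im := rfl

/-- the vertical change of a curve is the integral of its twist. -/
lemma HorizCurve.t_change (γ : HorizCurve n) :
    ∫ s in (0:ℝ)..1, 2 * (herm (γ.z s) (γ.z' s)).im = γ.t 1 - γ.t 0 :=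
  intervalIntegral.integral_eq_sub_of_hasDerivAt (fun s _ => γ.ht s)
    (γ.integrand_continuous.intervalIntegrable 0 1)

lemma HorizCurve.length_nonneg (γ : HorizCurve n) : 0 ≤ γ.length :=
  intervalIntegral.integral_nonneg zero_le_one fun s _ => norm_nonneg _

lemma HorizCurve.z_eq_integral (γ : HorizCurve n) :
    γ.z 1 - γ.z 0 = ∫ s in (0:ℝ)..1, γ.z' s :=
  (intervalIntegral.integral_eq_sub_of_hasDerivAt (fun s _ => γ.hz s)
    (γ.hz'.intervalIntegrable 0 1)).symm

lemma HorizCurve.norm_sub_le_length (γ : HorizCurve n) : ‖γ.z 1 - γ.z 0‖ ≤ γ.length := by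
  rw [γ.z_eq_integral]
  exact intervalIntegral.norm_integral_le_integral_norm zero_le_one

end Heis
namespace Heis
open intervalIntegral

variable {n : ℕ}

local notation "E" => EuclideanSpace ℂ (Fin n)

lemma herm_add_left (x y w : E) : herm (x + y) w = herm x w + herm y w := by
  simp [herm, add_mul, Finset.sum_add_distrib]

lemma herm_smul_left (a : ℝ) (x w : E) : herm (a • x) w = (a : ℂ) * herm x w := by
  simp only [herm, PiLp.smul_apply, Complex.real_smul, Finset.mul_sum, mul_assoc]

lemma herm_comb (a b : ℝ) (x y x' y' : E) :
    herm (a • x + b • y) (a • x' + b • y') =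
      (a:ℂ)^2 * herm x x' + (a:ℂ)*(b:ℂ) * herm x y' + (a:ℂ)*(b:ℂ) * herm y x'
        + (b:ℂ)^2 * herm y y' := by
  have h : ∀ j : Fin n, (a • x + b • y) j * (starRingEnd ℂ) ((a • x' + b • y') j)
      = (a:ℂ)^2 * (x j * (starRingEnd ℂ) (x' j)) + (a:ℂ)*(b:ℂ) * (x j * (starRingEnd ℂ) (y' j))
        + (a:ℂ)*(b:ℂ) * (y j * (starRingEnd ℂ) (x' j))
        + (b:ℂ)^2 * (y j * (starRingEnd ℂ) (y' j)) := by
    intro j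
    simp only [PiLp.add_apply, PiLp.smul_apply, Complex.real_smul, map_add, map_mul,
      Complex.conj_ofReal]
    ring
  unfold herm
  rw [Finset.sum_congr rfl fun j _ => h j]
  simp [Finset.sum_add_distrib, ← Finset.mul_sum]

/-- Componentwise complex conjugation as a real-linear isometry of `ℂⁿ`. -/
def conjE : E ≃ₗᵢ[ℝ] E := LinearIsometryEquiv.piLpCongrRight 2 fun _ => Complex.conjLIE

lemma conjE_apply (x : E) (j : Fin n) : conjE x j = (starRingEnd ℂ) (x j) := by
  simp [conjE, LinearIsometryEquiv.piLpCongrRight_apply]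

lemma conjE_conjE (x : E) : conjE (conjE x) = x := by
  ext j
  simp [conjE_apply]

lemma herm_conjE (x y : E) : herm (conjE x) (conjE y) = (starRingEnd ℂ) (herm x y) := by
  simp [herm, conjE_apply, map_sum, map_mul, mul_comm]

lemma hasDerivAt_conjE {z : ℝ → E} {z' : E} {s : ℝ} (h : HasDerivAt z z' s) :
    HasDerivAt (fun u => conjE (z u)) (conjE z') s := by
  have := (conjE.toLinearIsometry.toContinuousLinearMap.hasFDerivAt
    (x := z s)).comp_hasDerivAt s h
  exact this

lemma sigmaRefl_eq (p : Heis n) : sigmaRefl p = (conjE p.1, p.2) := by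
  refine Prod.ext ?_ rfl
  ext j
  simp [sigmaRefl, conjE_apply]

end Heis
namespace Heis
variable {n : ℕ}
local notation "E" => EuclideanSpace ℂ (Fin n)

lemma herm_add_right (x y w : E) : herm x (y + w) = herm x y + herm x w := by
  simp [herm, map_add, mul_add, Finset.sum_add_distrib]

lemma herm_sub_right (x y w : E) : herm x (y - w) = herm x y - herm x w := by
  simp [herm, map_sub, mul_sub, Finset.sum_sub_distrib]

lemma herm_smul_right (a : ℝ) (x w : E) : herm x (a • w) = (a : ℂ) * herm x w := by
  simp only [herm, PiLp.smul_apply, Complex.real_smul, map_mul, Complex.conj_ofReal,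
    Finset.mul_sum]
  congr 1
  ext j
  ring

end Heis
namespace Heis
variable {n : ℕ}
local notation "E" => EuclideanSpace ℂ (Fin n)

lemma herm_csmul_left (c : ℂ) (x w : E) : herm (c • x) w = c * herm x w := by
  simp only [herm, PiLp.smul_apply, smul_eq_mul, Finset.mul_sum, mul_assoc]

lemma herm_csmul_right (c : ℂ) (x w : E) : herm x (c • w) = (starRingEnd ℂ) c * herm x w := by
  simp only [herm, PiLp.smul_apply, smul_eq_mul, map_mul, Finset.mul_sum]
  congr 1
  ext j
  ring

lemma herm_swap (x w : E) : herm x w = (starRingEnd ℂ) (herm w x) := by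
  simp [herm, map_sum, map_mul, mul_comm]

lemma herm_single_one (i : Fin n) :
    herm (EuclideanSpace.single i (1:ℂ)) (EuclideanSpace.single i (1:ℂ)) = 1 := by
  simp [herm, EuclideanSpace.single_apply]

lemma abs_herm_le (x w : E) : ‖herm x w‖ ≤ ‖x‖ * ‖w‖ := by
  rw [herm_eq_inner]
  have := norm_inner_le_norm (𝕜 := ℂ) w x
  simpa [mul_comm] using this

end Heis
namespace Heis
open intervalIntegral

variable {n : ℕ}

local notation "E" => EuclideanSpace ℂ (Fin n)

/-- Reflecting a horizontal curve by `σ` (and translating vertically). -/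
lemma exists_conj_curve (γ : HorizCurve n) (a : ℝ) :
    ∃ δ : HorizCurve n, δ.z 0 = conjE (γ.z 0) ∧ δ.z 1 = conjE (γ.z 1) ∧ δ.t 0 = a ∧
      δ.t 1 = a - (γ.t 1 - γ.t 0) ∧ δ.length = γ.length := by
  refine ⟨{ z := fun s => conjE (γ.z s)
            t := fun s => a - (γ.t s - γ.t 0)
            z' := fun s => conjE (γ.z' s)
            hz := fun s => hasDerivAt_conjE (γ.hz s)
            hz' := conjE.continuous.comp γ.hz'
            ht := ?_ }, rfl, rfl, by simp, by simp, ?_⟩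
  · intro s
    have h := ((γ.ht s).sub_const (γ.t 0)).const_sub a
    have him : -(2 * (herm (γ.z s) (γ.z' s)).im)
        = 2 * (herm (conjE (γ.z s)) (conjE (γ.z' s))).im := by
      rw [herm_conjE]
      simp [Complex.conj_im]
    rwa [him] at h
  · unfold HorizCurve.length
    simp

end Heis
namespace Heis
open intervalIntegral

variable {n : ℕ}

local notation "E" => EuclideanSpace ℂ (Fin n)

lemma im_intervalIntegral {f : ℝ → ℂ} (hf : IntervalIntegrable f volume 0 1) :
    (∫ s in (0:ℝ)..1, f s).im = ∫ s in (0:ℝ)..1, (f s).im := by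
  have := Complex.imCLM.intervalIntegral_comp_comm hf
  simpa [Complex.imCLM_apply] using this.symm

lemma hasDerivAt_ofReal (s : ℝ) : HasDerivAt (fun s : ℝ => (s:ℂ)) 1 s := by
  exact Complex.ofRealCLM.hasDerivAt (x := s)

/-- The interpolation (surgery) lemma: from any horizontal curve `γ` one can build a
horizontal curve with the same `z`-endpoints, any prescribed initial height, vertical
change any value between `2 Im herm(z₀,z₁)` and the vertical change of `γ`, and length
at most that of `γ`. -/
lemma exists_interp_curve (γ : HorizCurve n) (c τ : ℝ)
    (hτ : τ ∈ Set.uIcc (2 * (herm (γ.z 0) (γ.z 1)).im) (γ.t 1 - γ.t 0)) :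
    ∃ δ : HorizCurve n, δ.z 0 = γ.z 0 ∧ δ.z 1 = γ.z 1 ∧ δ.t 0 = c ∧ δ.t 1 = c + τ ∧
      δ.length ≤ γ.length := by
  set z₀ := γ.z 0 with hz₀
  set z₁ := γ.z 1 with hz₁
  set u : E := z₁ - z₀ with hu
  set ch : ℝ → E := fun s => z₀ + s • u with hchdef
  have hch' : ∀ s : ℝ, HasDerivAt ch u s := by
    intro s
    exact (by simpa using (hasDerivAt_id s).smul_const u : HasDerivAt (fun x : ℝ => x • u) u s).const_add z₀
  have hchc : Continuous ch := by
    exact continuous_const.add (continuous_id.smul continuous_const)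
  set w : ℝ → ℝ → E := fun l s => l • γ.z s + (1 - l) • ch s with hwdef
  set w' : ℝ → ℝ → E := fun l s => l • γ.z' s + (1 - l) • u with hw'def
  have hwD : ∀ l s, HasDerivAt (w l) (w' l s) s := fun l s =>
    ((γ.hz s).const_smul l).add ((hch' s).const_smul (1 - l))
  have hw'c : ∀ l, Continuous (w' l) := fun l =>
    (γ.hz'.const_smul l).add continuous_const
  have hwc : ∀ l, Continuous (w l) := fun l =>
    (γ.cz.const_smul l).add (hchc.const_smul (1 - l))
  set c1 : ℂ := ∫ s in (0:ℝ)..1, herm (γ.z s) (γ.z' s) with hc1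
  set c2 : ℂ := ∫ s in (0:ℝ)..1, herm (γ.z s) u with hc2
  set c3 : ℂ := ∫ s in (0:ℝ)..1, herm (ch s) (γ.z' s) with hc3
  set c4 : ℂ := ∫ s in (0:ℝ)..1, herm (ch s) u with hc4
  have hI1 : IntervalIntegrable (fun s => herm (γ.z s) (γ.z' s)) volume 0 1 :=
    (continuous_herm γ.cz γ.hz').intervalIntegrable 0 1
  have hI2 : IntervalIntegrable (fun s => herm (γ.z s) u) volume 0 1 :=
    (continuous_herm γ.cz continuous_const).intervalIntegrable 0 1
  have hI3 : IntervalIntegrable (fun s => herm (ch s) (γ.z' s)) volume 0 1 :=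
    (continuous_herm hchc γ.hz').intervalIntegrable 0 1
  have hI4 : IntervalIntegrable (fun s => herm (ch s) u) volume 0 1 :=
    (continuous_herm hchc continuous_const).intervalIntegrable 0 1
  set P : ℝ → ℝ := fun l => 2 * ((l:ℂ)^2 * c1 + (l:ℂ)*((1-l:ℝ):ℂ) * c2
      + (l:ℂ)*((1-l:ℝ):ℂ) * c3 + ((1-l:ℝ):ℂ)^2 * c4).im with hPdef
  have key : ∀ l : ℝ, (∫ s in (0:ℝ)..1, 2 * (herm (w l s) (w' l s)).im) = P l := by
    intro l
    have hpt : ∀ s, herm (w l s) (w' l s)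
        = (l:ℂ)^2 * herm (γ.z s) (γ.z' s) + (l:ℂ)*((1 - l : ℝ):ℂ) * herm (γ.z s) u
          + (l:ℂ)*((1 - l : ℝ):ℂ) * herm (ch s) (γ.z' s)
          + ((1 - l : ℝ):ℂ)^2 * herm (ch s) u := fun s =>
      herm_comb l (1 - l) (γ.z s) (ch s) (γ.z' s) u
    have hIw : IntervalIntegrable (fun s => herm (w l s) (w' l s)) volume 0 1 :=
      (continuous_herm (hwc l) (hw'c l)).intervalIntegrable 0 1
    rw [intervalIntegral.integral_const_mul, ← im_intervalIntegral hIw]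
    have : (∫ s in (0:ℝ)..1, herm (w l s) (w' l s))
        = (l:ℂ)^2 * c1 + (l:ℂ)*((1-l:ℝ):ℂ) * c2 + (l:ℂ)*((1-l:ℝ):ℂ) * c3
          + ((1-l:ℝ):ℂ)^2 * c4 := by
      rw [intervalIntegral.integral_congr (g := fun s =>
        (l:ℂ)^2 * herm (γ.z s) (γ.z' s) + (l:ℂ)*((1 - l : ℝ):ℂ) * herm (γ.z s) u
          + (l:ℂ)*((1 - l : ℝ):ℂ) * herm (ch s) (γ.z' s)
          + ((1 - l : ℝ):ℂ)^2 * herm (ch s) u) (fun s _ => hpt s)]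
      rw [intervalIntegral.integral_add (((hI1.const_mul _).add (hI2.const_mul _)).add
          (hI3.const_mul _)) (hI4.const_mul _),
        intervalIntegral.integral_add ((hI1.const_mul _).add (hI2.const_mul _))
          (hI3.const_mul _),
        intervalIntegral.integral_add (hI1.const_mul _) (hI2.const_mul _),
        intervalIntegral.integral_const_mul, intervalIntegral.integral_const_mul,
        intervalIntegral.integral_const_mul, intervalIntegral.integral_const_mul]
    rw [this]
  have hP1 : P 1 = γ.t 1 - γ.t 0 := by
    rw [← γ.t_change, ← key 1]
    apply intervalIntegral.integral_congr
    intro s _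
    have h1 : w 1 s = γ.z s ∧ w' 1 s = γ.z' s := by
      constructor <;> simp [hwdef, hw'def]
    show 2 * (herm (w 1 s) (w' 1 s)).im = 2 * (herm (γ.z s) (γ.z' s)).im
    rw [h1.1, h1.2]
  have hc4val : c4 = herm z₀ u + (2⁻¹ : ℂ) * herm u u := by
    have hA : ∀ s ∈ Set.uIcc (0:ℝ) 1,
        HasDerivAt (fun s : ℝ => (s:ℂ) * herm z₀ u + ((s:ℂ) * (s:ℂ) * (2⁻¹ * herm u u)))
          (herm (ch s) u) s := by
      intro s _
      have h1 : HasDerivAt (fun s : ℝ => (s:ℂ) * herm z₀ u) (herm z₀ u) s := by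
        simpa using (hasDerivAt_ofReal s).mul_const (herm z₀ u)
      have h2 : HasDerivAt (fun s : ℝ => (s:ℂ) * (s:ℂ) * (2⁻¹ * herm u u))
          ((s:ℂ) * herm u u) s := by
        have := ((hasDerivAt_ofReal s).mul (hasDerivAt_ofReal s)).mul_const
          (2⁻¹ * herm u u)
        convert this using 1
        all_goals first | rfl | ring
      have h3 : herm (ch s) u = herm z₀ u + (s:ℂ) * herm u u := by
        rw [hchdef]
        simp only [herm_add_left, herm_smul_left]
      rw [h3]
      exact h1.add h2
    have := intervalIntegral.integral_eq_sub_of_hasDerivAt hA hI4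
    rw [hc4, this]
    push_cast
    ring
  have hP0 : P 0 = 2 * (herm z₀ z₁).im := by
    have h1 : herm z₀ u = herm z₀ z₁ - herm z₀ z₀ := by rw [hu, herm_sub_right]
    have h2 : P 0 = 2 * c4.im := by simp [hPdef]
    rw [h2, hc4val, h1]
    simp [Complex.add_im, Complex.sub_im, Complex.mul_im, herm_im_self]
  have hPc : Continuous P := by
    apply continuous_const.mul
    apply Complex.continuous_im.comp
    fun_prop
  have hsub := intermediate_value_uIcc (a := (0:ℝ)) (b := 1) hPc.continuousOn
  have hmem : τ ∈ Set.uIcc (P 0) (P 1) := by rw [hP0, hP1]; exact hτ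
  obtain ⟨l, hl, hPl⟩ := hsub hmem
  have hl' : l ∈ Set.Icc (0:ℝ) 1 := by rwa [Set.uIcc_of_le zero_le_one] at hl
  refine ⟨mkCurve (w l) (w' l) (hwD l) (hw'c l) c, ?_, ?_, by simp, ?_, ?_⟩
  · show w l 0 = z₀
    have : ch 0 = z₀ := by simp [hchdef]
    simp only [hwdef, this, ← add_smul]
    rw [← hz₀, ← add_smul]; simp
  · show w l 1 = z₁
    have : ch 1 = z₁ := by simp [hchdef, hu]
    simp only [hwdef, this, ← add_smul]
    rw [← hz₁, ← add_smul]; simp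
  · show (mkCurve (w l) (w' l) (hwD l) (hw'c l) c).t 1 = c + τ
    rw [mkCurve_t1, key l, hPl]
  · show (mkCurve (w l) (w' l) (hwD l) (hw'c l) c).length ≤ γ.length
    have hun : ‖u‖ ≤ γ.length := γ.norm_sub_le_length
    have hstep : (mkCurve (w l) (w' l) (hwD l) (hw'c l) c).length
        ≤ l * γ.length + (1 - l) * ‖u‖ := by
      unfold HorizCurve.length
      have hle : ∀ s ∈ Set.Icc (0:ℝ) 1,
          ‖(mkCurve (w l) (w' l) (hwD l) (hw'c l) c).z' s‖
            ≤ l * ‖γ.z' s‖ + (1 - l) * ‖u‖ := by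
        intro s _
        show ‖w' l s‖ ≤ _
        calc ‖l • γ.z' s + (1 - l) • u‖ ≤ ‖l • γ.z' s‖ + ‖(1 - l) • u‖ := norm_add_le _ _
          _ = l * ‖γ.z' s‖ + (1 - l) * ‖u‖ := by
              rw [norm_smul, norm_smul, Real.norm_of_nonneg hl'.1,
                Real.norm_of_nonneg (by linarith [hl'.2])]
      have h2 := intervalIntegral.integral_mono_on (μ := volume) zero_le_one
        ((hw'c l).norm.intervalIntegrable 0 1)
        (((continuous_const.mul γ.hz'.norm).add continuous_const).intervalIntegrable 0 1) hle
      refine le_trans h2 ?_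
      simp only [Pi.add_apply]
      rw [intervalIntegral.integral_add ((continuous_const.mul γ.hz'.norm).intervalIntegrable 0 1)
        (intervalIntegrable_const), intervalIntegral.integral_const_mul]
      simp [HorizCurve.length]
    refine le_trans hstep ?_
    nlinarith [γ.length_nonneg, hl'.1, hl'.2, norm_nonneg u]

end Heis
namespace Heis

private lemma arith_pos (x k mm r : ℝ) (hr : r = |x - k| + |mm| + 1) (h : k ≤ x) :
    x ≤ k + 4*r*mm + 4*Real.pi*r^2 := by
  have h1 : x - k ≤ |x - k| := le_abs_self _
  have h2 : -|mm| ≤ mm := neg_abs_le mm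
  have h3 : (0:ℝ) ≤ |mm| := abs_nonneg mm
  have h4 : (0:ℝ) ≤ |x - k| := abs_nonneg _
  have hrpos : (0:ℝ) < r := by rw [hr]; linarith
  have hr1 : |mm| + 1 ≤ r := by rw [hr]; linarith
  have h5 : r * (|mm| + 1) ≤ r * r := mul_le_mul_of_nonneg_left hr1 hrpos.le
  have h6 : 3 * r^2 ≤ Real.pi * r^2 :=
    mul_le_mul_of_nonneg_right Real.pi_gt_three.le (sq_nonneg r)
  have h7 : x - k ≤ r := by rw [hr]; linarith
  nlinarith [sq_nonneg r]

private lemma arith_neg (x k mm r : ℝ) (hr : r = |x - k| + |mm| + 1) (h : x ≤ k) :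
    k + 4*r*mm - 4*Real.pi*r^2 ≤ x := by
  have h1 : k - x ≤ |x - k| := by rw [abs_sub_comm]; exact le_abs_self _
  have h2 : mm ≤ |mm| := le_abs_self mm
  have h3 : (0:ℝ) ≤ |mm| := abs_nonneg mm
  have h4 : (0:ℝ) ≤ |x - k| := abs_nonneg _
  have hrpos : (0:ℝ) < r := by rw [hr]; linarith
  have hr1 : |mm| + 1 ≤ r := by rw [hr]; linarith
  have h5 : r * (|mm| + 1) ≤ r * r := mul_le_mul_of_nonneg_left hr1 hrpos.le
  have h6 : 3 * r^2 ≤ Real.pi * r^2 :=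
    mul_le_mul_of_nonneg_right Real.pi_gt_three.le (sq_nonneg r)
  have h7 : k - x ≤ r := by rw [hr]; linarith
  nlinarith [sq_nonneg r]

end Heis
namespace Heis
open intervalIntegral

variable {n : ℕ}

local notation "E" => EuclideanSpace ℂ (Fin n)

lemma exists_join_curve (hn : 0 < n) (p q : Heis n) :
    ∃ γ : HorizCurve n, γ.z 0 = p.1 ∧ γ.t 0 = p.2 ∧ γ.z 1 = q.1 ∧ γ.t 1 = q.2 ∧
      γ.length ≤ ‖q.1 - p.1‖
        + 2 * Real.pi * (|q.2 - p.2 - 2 * (herm p.1 q.1).im| + ‖q.1 - p.1‖ + 1) := by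
  classical
  set u : E := q.1 - p.1 with hu
  set v : E := EuclideanSpace.single (⟨0, hn⟩ : Fin n) (1:ℂ) with hv
  have hvnorm : ‖v‖ = 1 := by rw [hv, EuclideanSpace.norm_single]; simp
  set K₀ : ℝ := 2 * (herm p.1 q.1).im with hK
  set Δ : ℝ := q.2 - p.2 with hΔ
  set m : ℝ := (herm u v).im with hm
  have hmu : |m| ≤ ‖u‖ := by
    have h1 : |m| ≤ ‖herm u v‖ := Complex.abs_im_le_norm _
    have h2 := abs_herm_le u v
    rw [hvnorm] at h2
    simpa using h1.trans h2
  set R : ℝ := |Δ - K₀| + |m| + 1 with hR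
  have hR0 : (0:ℝ) < R := by positivity
  set ε : ℝ := if K₀ ≤ Δ then -1 else 1 with hε
  have hε1 : ε = 1 ∨ ε = -1 := by
    rw [hε]; split <;> simp
  have hε2 : ε ^ 2 = 1 := by rcases hε1 with h | h <;> rw [h] <;> ring
  set a : ℂ := (ε:ℂ) * (2 * (Real.pi:ℂ) * Complex.I) with ha
  have hea : Complex.exp a = 1 := by
    rcases hε1 with h | h <;> rw [ha, h]
    · push_cast
      simpa using Complex.exp_two_pi_mul_I
    · push_cast
      rw [show (-1 : ℂ) * (2 * (Real.pi:ℂ) * Complex.I) = -(2 * (Real.pi:ℂ) * Complex.I) by ring]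
      rw [Complex.exp_neg, Complex.exp_two_pi_mul_I]
      simp
  have hem : Complex.exp (-a) = 1 := by rw [Complex.exp_neg, hea]; simp
  have ha0 : a ≠ 0 := by
    rw [ha]
    apply mul_ne_zero
    · rcases hε1 with h | h <;> rw [h] <;> norm_num
    · apply mul_ne_zero
      · apply mul_ne_zero
        · norm_num
        · exact_mod_cast Complex.ofReal_ne_zero.2 Real.pi_ne_zero
      · exact Complex.I_ne_zero
  have hconja : (starRingEnd ℂ) a = -a := by
    rw [ha]
    simp only [map_mul, map_ofNat, Complex.conj_ofReal, Complex.conj_I]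
    ring
  set f : ℝ → ℂ := fun s => (R:ℂ) * (Complex.exp (a * s) - 1) with hf
  set f' : ℝ → ℂ := fun s => (R:ℂ) * (a * Complex.exp (a * s)) with hf'
  have hfD : ∀ s : ℝ, HasDerivAt f (f' s) s := by
    intro s
    have h1 : HasDerivAt (fun s0 : ℝ => a * (s0:ℂ)) a s := by
      simpa using (hasDerivAt_ofReal s).const_mul a
    have h2 := ((h1.cexp).sub_const 1).const_mul (R:ℂ)
    rw [hf, hf']
    convert h2 using 1
    all_goals first | rfl | ring
  have hfc : Continuous f := continuous_iff_continuousAt.2 fun s => (hfD s).continuousAt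
  have hf'c : Continuous f' := by
    rw [hf']
    apply continuous_const.mul
    apply continuous_const.mul
    exact Complex.continuous_exp.comp (continuous_const.mul Complex.continuous_ofReal)
  set ζ : ℝ → E := fun s => p.1 + s • u + f s • v with hζ
  set ζ' : ℝ → E := fun s => u + f' s • v with hζ'
  have hζD : ∀ s : ℝ, HasDerivAt ζ (ζ' s) s := by
    intro s
    have h1 : HasDerivAt (fun s0 : ℝ => p.1 + s0 • u) u s := by
      simpa using ((hasDerivAt_id s).smul_const u).const_add p.1
    exact h1.add ((hfD s).smul_const v)
  have hζc : Continuous ζ := continuous_iff_continuousAt.2 fun s => (hζD s).continuousAt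
  have hζ'c : Continuous ζ' := continuous_const.add (hf'c.smul continuous_const)
  set A : ℂ := herm p.1 u with hA
  set B : ℂ := herm u u with hB
  set C : ℂ := herm v u with hC
  set D : ℂ := herm p.1 v with hD
  set Eh : ℂ := herm u v with hEh
  set G : ℂ := herm v v with hG
  have hg : ∀ s : ℝ, herm (ζ s) (ζ' s)
      = A + (s:ℂ) * B + f s * C + (starRingEnd ℂ) (f' s) * D
        + (s:ℂ) * ((starRingEnd ℂ) (f' s)) * Eh + f s * ((starRingEnd ℂ) (f' s)) * G := by
    intro s
    rw [hζ, hζ']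
    simp only [herm_add_left, herm_add_right, herm_csmul_left, herm_csmul_right,
      herm_smul_left]
    rw [hA, hB, hC, hD, hEh, hG]
    ring
  have hconjf' : ∀ s : ℝ, (starRingEnd ℂ) (f' s)
      = -((R:ℂ) * (a * Complex.exp (-(a * s)))) := by
    intro s
    rw [hf']
    rw [map_mul, map_mul, ← Complex.exp_conj]
    simp only [map_mul, Complex.conj_ofReal, hconja]
    ring
  set Φ : ℝ → ℂ := fun s => A * s + B * ((s:ℂ) * s) * 2⁻¹
      + C * ((R:ℂ) * (Complex.exp (a * s) * a⁻¹ - s))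
      + D * ((R:ℂ) * Complex.exp (-(a * s)))
      + Eh * ((R:ℂ) * s * Complex.exp (-(a * s)) + (R:ℂ) * a⁻¹ * Complex.exp (-(a * s)))
      + G * (-((R:ℂ) * (R:ℂ) * a * s) - (R:ℂ) * (R:ℂ) * Complex.exp (-(a * s))) with hΦ
  have hΦD : ∀ s : ℝ, HasDerivAt Φ (herm (ζ s) (ζ' s)) s := by
    intro s
    rw [hg s, hconjf' s]
    simp only [hf]
    have hex : HasDerivAt (fun s0 : ℝ => Complex.exp (a * s0))
        (a * Complex.exp (a * s)) s := by
      have h1 : HasDerivAt (fun s0 : ℝ => a * (s0:ℂ)) a s := by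
        simpa using (hasDerivAt_ofReal s).const_mul a
      simpa [mul_comm] using h1.cexp
    have hexm : HasDerivAt (fun s0 : ℝ => Complex.exp (-(a * s0)))
        (-a * Complex.exp (-(a * s))) s := by
      have h1 : HasDerivAt (fun s0 : ℝ => -(a * (s0:ℂ))) (-a) s := by
        have h := ((hasDerivAt_ofReal s).const_mul a).neg; simp only [mul_one] at h; exact h
      simpa [mul_comm] using h1.cexp
    have t1 : HasDerivAt (fun s0 : ℝ => A * (s0:ℂ)) A s := by
      simpa using (hasDerivAt_ofReal s).const_mul A
    have t2 : HasDerivAt (fun s0 : ℝ => B * ((s0:ℂ) * s0) * 2⁻¹) ((s:ℂ) * B) s := by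
      have := (((hasDerivAt_ofReal s).mul (hasDerivAt_ofReal s)).const_mul B).mul_const
        (2⁻¹ : ℂ)
      convert this using 1
      all_goals try with_reducible_and_instances rfl
      ring
    have t3 : HasDerivAt (fun s0 : ℝ => C * ((R:ℂ) * (Complex.exp (a * s0) * a⁻¹ - s0)))
        (((R:ℂ) * (Complex.exp (a * s) - 1)) * C) s := by
      have := (((hex.mul_const a⁻¹).sub (hasDerivAt_ofReal s)).const_mul (R:ℂ)).const_mul C
      convert this using 1
      all_goals try with_reducible_and_instances rfl
      field_simp
      try ring
    have t4 : HasDerivAt (fun s0 : ℝ => D * ((R:ℂ) * Complex.exp (-(a * s0))))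
        (-((R:ℂ) * (a * Complex.exp (-(a * s)))) * D) s := by
      have := (hexm.const_mul (R:ℂ)).const_mul D
      convert this using 1
      all_goals try with_reducible_and_instances rfl
      ring
    have t5 : HasDerivAt (fun s0 : ℝ => Eh * ((R:ℂ) * s0 * Complex.exp (-(a * s0))
          + (R:ℂ) * a⁻¹ * Complex.exp (-(a * s0))))
        ((s:ℂ) * -((R:ℂ) * (a * Complex.exp (-(a * s)))) * Eh) s := by
      have h51 : HasDerivAt (fun s0 : ℝ => (R:ℂ) * (s0:ℂ)) ((R:ℂ) * 1) s :=
        ((hasDerivAt_ofReal s).const_mul (R:ℂ))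
      have h5 := ((h51.mul hexm).add (hexm.const_mul ((R:ℂ) * a⁻¹))).const_mul Eh
      convert h5 using 1
      all_goals try with_reducible_and_instances rfl
      field_simp
      ring
    have t6 : HasDerivAt (fun s0 : ℝ => G * (-((R:ℂ) * (R:ℂ) * a * s0)
          - (R:ℂ) * (R:ℂ) * Complex.exp (-(a * s0))))
        ((R:ℂ) * (Complex.exp (a * s) - 1) * -((R:ℂ) * (a * Complex.exp (-(a * s)))) * G)
        s := by
      have h61 : HasDerivAt (fun s0 : ℝ => (R:ℂ) * (R:ℂ) * a * (s0:ℂ))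
          ((R:ℂ) * (R:ℂ) * a * 1) s := by
        simpa using (hasDerivAt_ofReal s).const_mul ((R:ℂ) * (R:ℂ) * a)
      have := ((h61.neg.sub (hexm.const_mul ((R:ℂ) * (R:ℂ)))).const_mul G)
      convert this using 1
      all_goals try with_reducible_and_instances rfl
      simp only [Complex.exp_neg]
      field_simp [Complex.exp_ne_zero]
      ring
    have hsum := ((((t1.add t2).add t3).add t4).add t5).add t6
    rw [hΦ]
    exact hsum
  have hInt : IntervalIntegrable (fun s => herm (ζ s) (ζ' s)) volume 0 1 :=
    (continuous_herm hζc hζ'c).intervalIntegrable 0 1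
  have hval : (∫ s in (0:ℝ)..1, herm (ζ s) (ζ' s)) = Φ 1 - Φ 0 :=
    intervalIntegral.integral_eq_sub_of_hasDerivAt (fun s _ => hΦD s) hInt
  have hval2 : Φ 1 - Φ 0 = A + B * 2⁻¹ + (Eh - C) * (R:ℂ) - (R:ℂ) * (R:ℂ) * a * G := by
    rw [hΦ]
    push_cast
    simp only [mul_one, mul_zero, zero_mul, neg_zero, Complex.exp_zero, hea, hem]
    ring
  set V : ℝ := K₀ + 4*R*m - 4*Real.pi*ε*R^2 with hV
  have htc : (∫ s in (0:ℝ)..1, 2 * (herm (ζ s) (ζ' s)).im) = V := by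
    rw [intervalIntegral.integral_const_mul, ← im_intervalIntegral hInt, hval, hval2]
    have hAim : A.im = (herm p.1 q.1).im := by
      have h1 : A = herm p.1 q.1 - herm p.1 p.1 := by rw [hA, hu, herm_sub_right]
      rw [h1]
      simp [Complex.sub_im, herm_im_self]
    have hBim : B.im = 0 := herm_im_self u
    have hCim : C.im = -m := by
      rw [hC, herm_swap]
      simp [Complex.conj_im, hm]; rfl
    have hEim : Eh.im = m := rfl
    have hGval : G = 1 := by rw [hG, hv]; exact herm_single_one _
    rw [hGval, hV]
    simp only [Complex.add_im, Complex.sub_im, Complex.mul_im, Complex.mul_re,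
      Complex.ofReal_re, Complex.ofReal_im, Complex.inv_im, Complex.inv_re,
      Complex.I_re, Complex.I_im, Complex.one_re, Complex.one_im, mul_one, mul_zero,
      zero_mul, add_zero, zero_add, ha, hAim, hBim, hCim, hEim, hK]
    norm_num
    ring
  have hζ0 : ζ 0 = p.1 := by
    rw [hζ]
    simp [hf, Complex.exp_zero]
  have hζ1 : ζ 1 = q.1 := by
    rw [hζ]
    simp [hf, hea, hu]
  have hmem : Δ ∈ Set.uIcc
      (2 * (herm ((mkCurve ζ ζ' hζD hζ'c 0).z 0) ((mkCurve ζ ζ' hζD hζ'c 0).z 1)).im)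
      ((mkCurve ζ ζ' hζD hζ'c 0).t 1 - (mkCurve ζ ζ' hζD hζ'c 0).t 0) := by
    have hb1 : (mkCurve ζ ζ' hζD hζ'c 0).z 0 = p.1 := hζ0
    have hb2 : (mkCurve ζ ζ' hζD hζ'c 0).z 1 = q.1 := hζ1
    have hb3 : (mkCurve ζ ζ' hζD hζ'c 0).t 1 - (mkCurve ζ ζ' hζD hζ'c 0).t 0 = V := by
      rw [mkCurve_t1, mkCurve_t0, htc]
      ring
    rw [hb1, hb2, hb3, ← hK]
    rcases le_or_gt K₀ Δ with h | h
    · have hε' : ε = -1 := by rw [hε, if_pos h]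
      rw [Set.mem_uIcc]
      left
      refine ⟨h, ?_⟩
      rw [hV, hε']
      have := arith_pos Δ K₀ m R hR h
      linarith [this]
    · have hε' : ε = 1 := by rw [hε, if_neg (not_le.2 h)]
      rw [Set.mem_uIcc]
      right
      refine ⟨?_, h.le⟩
      rw [hV, hε']
      have := arith_neg Δ K₀ m R hR h.le
      linarith [this]
  obtain ⟨δ, hδz0, hδz1, hδt0, hδt1, hδlen⟩ :=
    exists_interp_curve (mkCurve ζ ζ' hζD hζ'c 0) p.2 Δ hmem
  have hblen : (mkCurve ζ ζ' hζD hζ'c 0).length ≤ ‖u‖ + 2 * Real.pi * R := by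
    have hpt : ∀ s ∈ Set.Icc (0:ℝ) 1,
        ‖(mkCurve ζ ζ' hζD hζ'c 0).z' s‖ ≤ ‖u‖ + 2 * Real.pi * R := by
      intro s _
      show ‖ζ' s‖ ≤ _
      rw [hζ']
      refine le_trans (norm_add_le _ _) ?_
      have h1 : ‖f' s • v‖ = ‖f' s‖ := by
        rw [norm_smul, hvnorm, mul_one]
      have hre : (a * (s:ℝ)).re = 0 := by
        rw [ha]
        simp [Complex.mul_re, Complex.mul_im]
      have habsa : ‖a‖ = 2 * Real.pi := by
        rw [ha]
        rcases hε1 with hh | hh <;> rw [hh] <;>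
          simp [norm_mul, Complex.norm_real, Complex.norm_I,
            abs_of_nonneg Real.pi_pos.le] <;> push_cast <;>
          simp [norm_mul, Complex.norm_real, Complex.norm_I,
            abs_of_nonneg Real.pi_pos.le]
      have h2 : ‖f' s‖ = 2 * Real.pi * R := by
        rw [hf']
        rw [norm_mul, norm_mul, Complex.norm_real, Real.norm_eq_abs, Complex.norm_exp, hre, habsa]
        rw [abs_of_pos hR0]
        simp [Real.exp_zero]
        ring
      rw [h1, h2]
    have h3 := intervalIntegral.integral_mono_on (μ := volume) zero_le_one
      (((mkCurve ζ ζ' hζD hζ'c 0).hz').norm.intervalIntegrable 0 1)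
      (intervalIntegrable_const) hpt
    refine le_trans h3 ?_
    simp
  have hRle : R ≤ |Δ - K₀| + ‖u‖ + 1 := by
    rw [hR]
    linarith [hmu]
  refine ⟨δ, hδz0.trans hζ0, hδt0, hδz1.trans hζ1, ?_, ?_⟩
  · rw [hδt1, hΔ]
    ring
  · refine le_trans hδlen (le_trans hblen ?_)
    have h6 : 2 * Real.pi * R ≤ 2 * Real.pi * (|Δ - K₀| + ‖u‖ + 1) :=
      mul_le_mul_of_nonneg_left hRle (by positivity)
    have h7 : |q.2 - p.2 - 2 * (herm p.1 q.1).im| = |Δ - K₀| := by rw [hΔ, hK]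
    rw [h7]
    linarith
end Heis
namespace Heis
variable {n : ℕ}
local notation "E" => EuclideanSpace ℂ (Fin n)

lemma herm_zero_right (x : E) : herm x 0 = 0 := by simp [herm]

/-- The set of lengths of curves joining `p` and `q`. -/
def JS (p q : Heis n) : Set ℝ :=
  { L : ℝ | ∃ γ : HorizCurve n, γ.z 0 = p.1 ∧ γ.t 0 = p.2 ∧
      γ.z 1 = q.1 ∧ γ.t 1 = q.2 ∧ L = γ.length }

lemma ccDist_eq (p q : Heis n) : ccDist p q = sInf (JS p q) := rfl

lemma JS_bddBelow (p q : Heis n) : BddBelow (JS p q) := by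
  refine ⟨0, ?_⟩
  rintro L ⟨γ, -, -, -, -, rfl⟩
  exact γ.length_nonneg

lemma ccDist_nonneg (p q : Heis n) : 0 ≤ ccDist p q := by
  apply Real.sInf_nonneg
  rintro L ⟨γ, -, -, -, -, rfl⟩
  exact γ.length_nonneg

lemma ccDist_le_length (γ : HorizCurve n) (p q : Heis n) (h1 : γ.z 0 = p.1)
    (h2 : γ.t 0 = p.2) (h3 : γ.z 1 = q.1) (h4 : γ.t 1 = q.2) :
    ccDist p q ≤ γ.length :=
  csInf_le (JS_bddBelow p q) ⟨γ, h1, h2, h3, h4, rfl⟩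

/-- The constant curve at a point. -/
def constCurve (p : Heis n) : HorizCurve n :=
  mkCurve (fun _ => p.1) (fun _ => 0) (fun s => hasDerivAt_const s p.1)
    continuous_const p.2

lemma ccDist_self (p : Heis n) : ccDist p p = 0 := by
  refine le_antisymm ?_ (ccDist_nonneg p p)
  have h := ccDist_le_length (constCurve p) p p rfl (by simp [constCurve]) rfl ?_
  · refine le_trans h (le_of_eq ?_)
    simp [constCurve, HorizCurve.length, mkCurve]
  · rw [constCurve, mkCurve_t1]
    simp [herm_zero_right]

lemma ccDist_le_of_dominates (p q P Q : Heis n)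
    (hne : ∃ γ : HorizCurve n, γ.z 0 = P.1 ∧ γ.t 0 = P.2 ∧ γ.z 1 = Q.1 ∧ γ.t 1 = Q.2)
    (H : ∀ γ : HorizCurve n, γ.z 0 = P.1 → γ.t 0 = P.2 → γ.z 1 = Q.1 → γ.t 1 = Q.2 →
      ∃ δ : HorizCurve n, δ.z 0 = p.1 ∧ δ.t 0 = p.2 ∧ δ.z 1 = q.1 ∧ δ.t 1 = q.2 ∧
        δ.length ≤ γ.length) :
    ccDist p q ≤ ccDist P Q := by
  rw [ccDist_eq P Q]
  obtain ⟨γ₀, hγ₀⟩ := hne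
  refine le_csInf ⟨γ₀.length, γ₀, hγ₀.1, hγ₀.2.1, hγ₀.2.2.1, hγ₀.2.2.2, rfl⟩ ?_
  rintro L ⟨γ, h1, h2, h3, h4, rfl⟩
  obtain ⟨δ, d1, d2, d3, d4, d5⟩ := H γ h1 h2 h3 h4
  exact (ccDist_le_length δ p q d1 d2 d3 d4).trans d5

lemma slice_bounds {F : Set (Heis n)} (hF : IsCompact F) {x : Heis n}
    (hx : x ∈ steiner F) :
    ∃ sa sb : ℝ, (x.1, sa) ∈ F ∧ (x.1, sb) ∈ F ∧ 2 * |x.2| ≤ sb - sa := by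
  obtain ⟨hx1, hx2⟩ := hx
  set S : Set ℝ := { s : ℝ | ((x.1, s) : Heis n) ∈ F } with hS
  have hSne : S.Nonempty := by
    obtain ⟨y, hy, hy1⟩ := hx1
    refine ⟨y.2, ?_⟩
    rw [hS]
    simp only [Set.mem_setOf_eq]
    rw [← hy1]
    simpa using hy
  have hSclosed : IsClosed S := by
    have : Continuous fun s : ℝ => ((x.1, s) : Heis n) :=
      continuous_const.prodMk continuous_id
    exact hF.isClosed.preimage this
  have hSsub : S ⊆ Prod.snd '' F := fun s hs => ⟨(x.1, s), hs, rfl⟩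
  have hScomp : IsCompact S :=
    (hF.image continuous_snd).of_isClosed_subset hSclosed hSsub
  have hbdd : BddAbove S := hScomp.bddAbove
  have hbdd' : BddBelow S := hScomp.bddBelow
  refine ⟨sInf S, sSup S, hScomp.sInf_mem hSne, hScomp.sSup_mem hSne, ?_⟩
  have hsub2 : S ⊆ Set.Icc (sInf S) (sSup S) := fun s hs =>
    ⟨csInf_le hbdd' hs, le_csSup hbdd hs⟩
  have hmeas : volume S ≤ ENNReal.ofReal (sSup S - sInf S) := by
    calc volume S ≤ volume (Set.Icc (sInf S) (sSup S)) := measure_mono hsub2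
      _ = ENNReal.ofReal (sSup S - sInf S) := Real.volume_Icc
  have h2 : (volume S).toReal ≤ sSup S - sInf S := by
    have := ENNReal.toReal_mono ENNReal.ofReal_ne_top hmeas
    refine this.trans (le_of_eq ?_)
    exact ENNReal.toReal_ofReal
      (by linarith [le_csSup hbdd (hScomp.sInf_mem hSne)])
  exact le_trans hx2 h2

end Heis
namespace Heis
variable {n : ℕ}
local notation "E" => EuclideanSpace ℂ (Fin n)

lemma ccDist_le_direct (hn : 0 < n) (p q : Heis n) (s s' : ℝ)
    (hmem : q.2 - p.2 ∈ Set.uIcc (2 * (herm p.1 q.1).im) (s' - s)) :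
    ccDist p q ≤ ccDist (p.1, s) (q.1, s') := by
  apply ccDist_le_of_dominates
  · obtain ⟨γ, h1, h2, h3, h4, -⟩ := exists_join_curve hn (p.1, s) (q.1, s')
    exact ⟨γ, h1, h2, h3, h4⟩
  · intro γ h1 h2 h3 h4
    have hmem' : q.2 - p.2 ∈ Set.uIcc (2 * (herm (γ.z 0) (γ.z 1)).im)
        (γ.t 1 - γ.t 0) := by
      rw [h1, h2, h3, h4]
      exact hmem
    obtain ⟨δ, d1, d2, d3, d4, d5⟩ := exists_interp_curve γ p.2 (q.2 - p.2) hmem'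
    refine ⟨δ, by rw [d1, h1], d3, by rw [d2, h3], by rw [d4]; ring, d5⟩

lemma ccDist_le_sigma (hn : 0 < n) (p q : Heis n) (s s' : ℝ)
    (hmem : q.2 - p.2 ∈ Set.uIcc (2 * (herm p.1 q.1).im) (s - s')) :
    ccDist p q ≤ ccDist (conjE p.1, s) (conjE q.1, s') := by
  apply ccDist_le_of_dominates
  · obtain ⟨γ, h1, h2, h3, h4, -⟩ := exists_join_curve hn (conjE p.1, s) (conjE q.1, s')
    exact ⟨γ, h1, h2, h3, h4⟩
  · intro γ h1 h2 h3 h4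
    obtain ⟨δ₁, c1, c2, c3, c4, c5⟩ := exists_conj_curve γ 0
    have hz0 : δ₁.z 0 = p.1 := by rw [c1, h1]; exact conjE_conjE p.1
    have hz1 : δ₁.z 1 = q.1 := by rw [c2, h3]; exact conjE_conjE q.1
    have hch : δ₁.t 1 - δ₁.t 0 = s - s' := by rw [c3, c4, h2, h4]; ring
    have hmem' : q.2 - p.2 ∈ Set.uIcc (2 * (herm (δ₁.z 0) (δ₁.z 1)).im)
        (δ₁.t 1 - δ₁.t 0) := by
      rw [hz0, hz1, hch]
      exact hmem
    obtain ⟨δ, d1, d2, d3, d4, d5⟩ := exists_interp_curve δ₁ p.2 (q.2 - p.2) hmem'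
    refine ⟨δ, by rw [d1, hz0], d3, by rw [d2, hz1], by rw [d4]; ring, ?_⟩
    rw [← c5]
    exact d5

lemma mem_F_conj {F : Set (Heis n)} (hσ : sigmaRefl '' F = F) {z : E} {s : ℝ}
    (h : ((z, s) : Heis n) ∈ F) : ((conjE z, s) : Heis n) ∈ F := by
  rw [← hσ]
  refine ⟨(z, s), h, ?_⟩
  rw [sigmaRefl_eq]

end Heis

namespace Heis
variable {n : ℕ}
local notation "E" => EuclideanSpace ℂ (Fin n)

lemma ccDist_zero_dim (p q : Heis 0) : ccDist p q = 0 := by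
  by_cases h : p.2 = q.2
  · have hpq : p = q := Prod.ext (Subsingleton.elim _ _) h
    rw [hpq, ccDist_self]
  · rw [ccDist_eq]
    have hJ : JS p q = ∅ := by
      rw [Set.eq_empty_iff_forall_notMem]
      rintro L ⟨γ, -, h2, -, h4, -⟩
      have hconst : ∀ x y : ℝ, γ.t x = γ.t y := by
        apply is_const_of_deriv_eq_zero
        · exact fun s => (γ.ht s).differentiableAt
        · intro s
          have h5 := (γ.ht s).deriv
          have h6 : (herm (γ.z s) (γ.z' s)) = 0 := by simp [herm]
          rw [h5, h6]
          simp
      exact h (by rw [← h2, ← h4]; exact hconst 0 1)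
    rw [hJ, Real.sInf_empty]

lemma ccDiam_nonneg (F : Set (Heis n)) : 0 ≤ ccDiam F := by
  apply Real.sSup_nonneg
  rintro r ⟨p, -, q, -, rfl⟩
  exact ccDist_nonneg p q

end Heis

/-- If `F` is compact and `σ(F) = F` (with `σ[z,t] = [conj z, t]`), then Steiner
symmetrization with respect to the `ℂⁿ`-plane does not increase the CC-diameter. -/
theorem stmt11 (n : ℕ) (F : Set (Heis n)) (hF : IsCompact F)
    (hσ : Heis.sigmaRefl '' F = F) :
    Heis.ccDiam (Heis.steiner F) ≤ Heis.ccDiam F := by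

  rcases Nat.eq_zero_or_pos n with hn | hn
  · subst hn
    apply Real.sSup_le _ (Heis.ccDiam_nonneg F)
    rintro r ⟨p, -, q, -, rfl⟩
    rw [Heis.ccDist_zero_dim p q]
    exact Heis.ccDiam_nonneg F
  rcases F.eq_empty_or_nonempty with hFe | ⟨p₀, hp₀⟩
  · have h1 : Heis.steiner F = ∅ := by
      rw [hFe]
      ext x
      simp [Heis.steiner]
    rw [h1, hFe]
  · obtain ⟨C, hC⟩ := isBounded_iff_forall_norm_le.1 hF.isBounded
    have hC0 : 0 ≤ C := le_trans (norm_nonneg p₀) (hC p₀ hp₀)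
    set M : ℝ := 2*C + 2*Real.pi*((2*C + 2*(C*C)) + 2*C + 1) with hM
    have hBdd : BddAbove {r : ℝ | ∃ p ∈ F, ∃ q ∈ F, r = Heis.ccDist p q} := by
      refine ⟨M, ?_⟩
      rintro r ⟨p, hp, q, hq, rfl⟩
      obtain ⟨γ, h1, h2, h3, h4, hlen⟩ := Heis.exists_join_curve hn p q
      refine (Heis.ccDist_le_length γ p q h1 h2 h3 h4).trans (hlen.trans ?_)
      have hp1 : ‖p.1‖ ≤ C := (norm_fst_le p).trans (hC p hp)
      have hq1 : ‖q.1‖ ≤ C := (norm_fst_le q).trans (hC q hq)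
      have hp2 : |p.2| ≤ C := by
        have := (norm_snd_le p).trans (hC p hp)
        rwa [Real.norm_eq_abs] at this
      have hq2 : |q.2| ≤ C := by
        have := (norm_snd_le q).trans (hC q hq)
        rwa [Real.norm_eq_abs] at this
      have hsub : ‖q.1 - p.1‖ ≤ 2*C := (norm_sub_le _ _).trans (by linarith)
      have hherm : |(Heis.herm p.1 q.1).im| ≤ C*C :=
        (Complex.abs_im_le_norm _).trans ((Heis.abs_herm_le p.1 q.1).trans
          (mul_le_mul hp1 hq1 (norm_nonneg _) hC0))
      have habs2 : |q.2 - p.2 - 2*(Heis.herm p.1 q.1).im| ≤ 2*C + 2*(C*C) := by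
        have t1 : |q.2 - p.2 - 2*(Heis.herm p.1 q.1).im|
            ≤ |q.2| + |p.2| + 2 * |(Heis.herm p.1 q.1).im| := by
          have u1 := abs_add_le (q.2 - p.2) (-(2*(Heis.herm p.1 q.1).im))
          have u2 := abs_add_le q.2 (-p.2)
          have u3 : |(-(2*(Heis.herm p.1 q.1).im))| = 2*|(Heis.herm p.1 q.1).im| := by
            rw [abs_neg, abs_mul]
            norm_num
          simp only [sub_eq_add_neg]
          calc |q.2 + -p.2 + -(2*(Heis.herm p.1 q.1).im)|
              ≤ |q.2 + -p.2| + |(-(2*(Heis.herm p.1 q.1).im))| := u1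
            _ ≤ |q.2| + |(-p.2)| + 2*|(Heis.herm p.1 q.1).im| := by
                rw [u3]; linarith [u2, abs_neg p.2]
            _ = |q.2| + |p.2| + 2*|(Heis.herm p.1 q.1).im| := by rw [abs_neg]
        linarith
      rw [hM]
      have hpi : (0:ℝ) ≤ 2 * Real.pi := by positivity
      have hfin : |q.2 - p.2 - 2*(Heis.herm p.1 q.1).im| + ‖q.1 - p.1‖ + 1
          ≤ (2*C + 2*(C*C)) + 2*C + 1 := by linarith
      have := mul_le_mul_of_nonneg_left hfin hpi
      calc ‖q.1 - p.1‖ + 2 * Real.pi * (|q.2 - p.2 - 2 * (Heis.herm p.1 q.1).im|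
              + ‖q.1 - p.1‖ + 1)
          ≤ 2*C + 2 * Real.pi * ((2*C + 2*(C*C)) + 2*C + 1) := by linarith
        _ = _ := rfl
    have hB0 : 0 ≤ Heis.ccDiam F := Heis.ccDiam_nonneg F
    apply Real.sSup_le _ hB0
    rintro r ⟨p, hp, q, hq, rfl⟩
    obtain ⟨sa, sb, hsa, hsb, hab⟩ := Heis.slice_bounds hF hp
    obtain ⟨sa', sb', hsa', hsb', hab'⟩ := Heis.slice_bounds hF hq
    have habs : |q.2 - p.2| ≤ |q.2| + |p.2| := by
      simpa [sub_eq_add_neg] using abs_add_le q.2 (-p.2)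
    have hup : 2 * |p.2| ≥ 0 := by positivity
    rcases le_total (2 * (Heis.herm p.1 q.1).im) (q.2 - p.2) with hcase | hcase
    · by_cases h : q.2 - p.2 ≤ sb' - sa
      · have step := Heis.ccDist_le_direct hn p q sa sb'
          (Set.mem_uIcc.2 (Or.inl ⟨hcase, h⟩))
        exact step.trans (le_csSup hBdd ⟨(p.1, sa), hsa, (q.1, sb'), hsb', rfl⟩)
      · have h2 : q.2 - p.2 ≤ sb - sa' := by
          have h3 : q.2 - p.2 ≤ |q.2 - p.2| := le_abs_self _
          have h4 : (0:ℝ) ≤ 2 * |p.2| := by positivity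
          have h5 : (0:ℝ) ≤ 2 * |q.2| := by positivity
          have h6 := le_abs_self p.2
          have h7 := le_abs_self q.2
          linarith [not_le.1 h]
        have step := Heis.ccDist_le_sigma hn p q sb sa'
          (Set.mem_uIcc.2 (Or.inl ⟨hcase, h2⟩))
        exact step.trans (le_csSup hBdd ⟨(Heis.conjE p.1, sb), Heis.mem_F_conj hσ hsb,
          (Heis.conjE q.1, sa'), Heis.mem_F_conj hσ hsa', rfl⟩)
    · by_cases h : sa' - sb ≤ q.2 - p.2
      · have step := Heis.ccDist_le_direct hn p q sb sa'
          (Set.mem_uIcc.2 (Or.inr ⟨h, hcase⟩))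
        exact step.trans (le_csSup hBdd ⟨(p.1, sb), hsb, (q.1, sa'), hsa', rfl⟩)
      · have h2 : sa - sb' ≤ q.2 - p.2 := by
          have h3 : -|q.2 - p.2| ≤ q.2 - p.2 := neg_abs_le _
          linarith [not_le.1 h]
        have step := Heis.ccDist_le_sigma hn p q sa sb'
          (Set.mem_uIcc.2 (Or.inr ⟨h2, hcase⟩))
        exact step.trans (le_csSup hBdd ⟨(Heis.conjE p.1, sa), Heis.mem_F_conj hσ hsa,
          (Heis.conjE q.1, sb'), Heis.mem_F_conj hσ hsb', rfl⟩)
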